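/- (Lemma `lemma.empty.1`) There exist M₀ ≥ 1 and C₁ > 0, depending only on m̄, C₀, γ₀ and α (and not on M, γ, τ, ℓ, n, n'), such that for every M ≥ M₀, every sign σ ∈ {+1,−1}, every ℓ ∈ ℤ^ν and all n, n' ∈ ℕ₀, the following holds: if there exists ω ∈ R_M with |ω·ℓ + μ_n(ω) + σ·μ'_{n'}(ω)| < γ·⟨ℓ⟩^{−τ}·⟨n + σn'⟩^α·M^{−α}, then |n + σn'| ≤ C₁·M·⟨ℓ⟩. -/

import Mathlib

noncomputable section

open MeasureTheory

/-- The closed annulus `R_M = {ω ∈ ℝ^ν : M ≤ |ω| ≤ 2M}`. -/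
def RM (ν : ℕ) (M : ℝ) : Set (EuclideanSpace ℝ (Fin ν)) :=
  {ω | M ≤ ‖ω‖ ∧ ‖ω‖ ≤ 2 * M}

/-- Euclidean norm of an integer vector `ℓ ∈ ℤ^ν`. -/
def znorm {ν : ℕ} (ℓ : Fin ν → ℤ) : ℝ := Real.sqrt (∑ i, ((ℓ i : ℝ)) ^ 2)

/-- The inner product `ω·ℓ`. -/
def dotZ {ν : ℕ} (ω : EuclideanSpace ℝ (Fin ν)) (ℓ : Fin ν → ℤ) : ℝ :=
  ∑ i, ω i * (ℓ i : ℝ)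

/-- Japanese bracket of a real number, `⟨x⟩ = max {1, |x|}`. -/
def japR (x : ℝ) : ℝ := max 1 |x|

/-- Japanese bracket of an integer vector, `⟨ℓ⟩ = max {1, |ℓ|}`. -/
def japZv {ν : ℕ} (ℓ : Fin ν → ℤ) : ℝ := max 1 (znorm ℓ)

/-- The Diophantine set `Ω₀ = {ω ∈ R_M : |ω·ℓ| ≥ γ₀ M ⟨ℓ⟩^{−τ₀} ∀ ℓ ≠ 0}`. -/
def dioph (ν : ℕ) (M γ₀ τ₀ : ℝ) : Set (EuclideanSpace ℝ (Fin ν)) :=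
  {ω ∈ RM ν M | ∀ ℓ : Fin ν → ℤ, ℓ ≠ 0 → γ₀ * M * japZv ℓ ^ (-τ₀) ≤ |dotZ ω ℓ|}

lemma aux_tri (σ A d e1 e2 e3 e4 : ℝ) (hσ : σ = 1 ∨ σ = -1) :
    |A - d - e1 - σ*e2 - e3 - σ*e4| ≤ |A| + |d| + |e1| + |e2| + |e3| + |e4| := by
  rcases hσ with rfl | rfl <;>
  · rw [abs_le]
    constructor <;>
      linarith [le_abs_self A, neg_abs_le A, le_abs_self d, neg_abs_le d,
        le_abs_self e1, neg_abs_le e1, le_abs_self e2, neg_abs_le e2,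
        le_abs_self e3, neg_abs_le e3, le_abs_self e4, neg_abs_le e4]

lemma dotZ_le {ν : ℕ} (ω : EuclideanSpace ℝ (Fin ν)) (ℓ : Fin ν → ℤ) :
    |dotZ ω ℓ| ≤ ‖ω‖ * znorm ℓ := by
  set v : EuclideanSpace ℝ (Fin ν) := WithLp.toLp 2 (fun i => (ℓ i : ℝ))
  have hv : ‖v‖ = znorm ℓ := by
    simp [v, znorm, EuclideanSpace.norm_eq, Real.norm_eq_abs, sq_abs]
  have hd : dotZ ω ℓ = inner ℝ ω v := by
    simp [dotZ, v, PiLp.inner_apply, RCLike.inner_apply, mul_comm]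
  rw [hd, ← hv]
  exact abs_real_inner_le_norm ω v

/-- **Lemma `lemma.empty.1`.** If the nearly-resonant set is nonempty, then
`|n ± n'| ≤ C₁ M ⟨ℓ⟩`, with `M₀`, `C₁` depending only on `m̄`, `C₀`, `γ₀`, `α`. -/
theorem lemma_empty_1
    (α γ₀ mbar C₀ : ℝ) (hα : 0 < α) (hα1 : α < 1)
    (hγ₀ : 0 < γ₀) (hγ₀1 : γ₀ < 1) (hmbar : 0 < mbar) (hC₀ : 0 < C₀) :
    ∃ M₀ C₁ : ℝ, 1 ≤ M₀ ∧ 0 < C₁ ∧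
      ∀ ν : ℕ, 1 ≤ ν →
      ∀ M : ℝ, M₀ ≤ M →
      ∀ γ τ₀ τ : ℝ, 0 < γ → γ < 1 → (ν : ℝ) - 1 < τ₀ → τ₀ ≤ τ →
      ∀ lam : ℕ → ℝ, (∀ n : ℕ, |lam n - (n : ℝ)| ≤ mbar / max 1 (n : ℝ)) →
      ∀ μ μ' : ℕ → EuclideanSpace ℝ (Fin ν) → ℝ,
        (∀ n : ℕ, ∀ ω ∈ RM ν M,
          |μ n ω - lam n| ≤ C₀ / (γ₀ * M) / (max 1 (n : ℝ)) ^ α) →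
        (∀ n : ℕ, ∀ ω ∈ RM ν M,
          |μ' n ω - lam n| ≤ C₀ / (γ₀ * M) / (max 1 (n : ℝ)) ^ α) →
      ∀ σ : ℝ, (σ = 1 ∨ σ = -1) →
      ∀ (ℓ : Fin ν → ℤ) (n n' : ℕ),
        (∃ ω ∈ RM ν M,
          |dotZ ω ℓ + μ n ω + σ * μ' n' ω| <
            γ * japZv ℓ ^ (-τ) * japR ((n : ℝ) + σ * (n' : ℝ)) ^ α * M ^ (-α)) →
        |(n : ℝ) + σ * (n' : ℝ)| ≤ C₁ * M * japZv ℓ := by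
  refine ⟨2, 4 + 4*mbar + 4*(C₀/γ₀), by norm_num, by positivity, ?_⟩
  intro ν hν M hM γ τ₀ τ hγ hγ1 hτ₀ hττ lam hlam μ μ' hμ hμ' σ hσ ℓ n n' ⟨ω, hω, hres⟩
  have hM1 : (1:ℝ) ≤ M := by linarith
  have hM0 : (0:ℝ) < M := by linarith
  have hjl : (1:ℝ) ≤ japZv ℓ := le_max_left _ _
  have hMj : (1:ℝ) ≤ M * japZv ℓ := by nlinarith
  have hCγ : (0:ℝ) ≤ C₀/γ₀ := by positivity
  set x : ℝ := (n : ℝ) + σ * (n' : ℝ) with hxdef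
  have hC1 : (1:ℝ) ≤ 4 + 4*mbar + 4*(C₀/γ₀) := by linarith
  by_cases hx : |x| ≤ M
  · calc |x| ≤ M := hx
      _ = M * 1 := (mul_one M).symm
      _ ≤ M * ((4 + 4*mbar + 4*(C₀/γ₀)) * japZv ℓ) := by
          refine mul_le_mul_of_nonneg_left (hC1.trans ?_) hM0.le
          exact le_mul_of_one_le_right (by linarith) hjl
      _ = (4 + 4*mbar + 4*(C₀/γ₀)) * M * japZv ℓ := by ring
  · push_neg at hx
    have hx1 : (1:ℝ) ≤ |x| := by linarith
    -- eigenvalue bounds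
    have hone : ∀ m : ℕ, (1:ℝ) ≤ (max 1 (m:ℝ)) ^ α := fun m =>
      Real.one_le_rpow (le_max_left _ _) hα.le
    have hCM : (0:ℝ) ≤ C₀ / (γ₀ * M) := by positivity
    have h1 : |μ n ω - lam n| ≤ C₀ / (γ₀ * M) :=
      (hμ n ω hω).trans (div_le_self hCM (hone n))
    have h2 : |μ' n' ω - lam n'| ≤ C₀ / (γ₀ * M) :=
      (hμ' n' ω hω).trans (div_le_self hCM (hone n'))
    have h3 : |lam n - (n:ℝ)| ≤ mbar :=
      (hlam n).trans (div_le_self hmbar.le (le_max_left _ _))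
    have h4 : |lam n' - (n':ℝ)| ≤ mbar :=
      (hlam n').trans (div_le_self hmbar.le (le_max_left _ _))
    -- dot product bound
    have hdot : |dotZ ω ℓ| ≤ 2 * M * japZv ℓ := by
      have := dotZ_le ω ℓ
      have hzn : znorm ℓ ≤ japZv ℓ := le_max_right _ _
      have hz0 : 0 ≤ znorm ℓ := Real.sqrt_nonneg _
      nlinarith [hω.2, norm_nonneg ω]
    -- resonance RHS bound
    have hτ0 : (0:ℝ) ≤ τ := by
      have : (1:ℝ) ≤ (ν : ℝ) := by exact_mod_cast hν
      linarith
    have hjτ : japZv ℓ ^ (-τ) ≤ 1 :=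
      Real.rpow_le_one_of_one_le_of_nonpos hjl (by linarith)
    have hjτ0 : (0:ℝ) ≤ japZv ℓ ^ (-τ) := Real.rpow_nonneg (by linarith) _
    have hjapRx : japR x = |x| := max_eq_right hx1
    have hxM : |x| ^ α * M ^ (-α) = (|x| / M) ^ α := by
      rw [Real.rpow_neg hM0.le, Real.div_rpow (abs_nonneg x) hM0.le, div_eq_mul_inv]
    have hxM2 : (|x| / M) ^ α ≤ |x| / 2 := by
      have h1le : (1:ℝ) ≤ |x| / M := (one_le_div hM0).mpr hx.le
      calc (|x| / M) ^ α ≤ (|x| / M) ^ (1:ℝ) :=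
            Real.rpow_le_rpow_of_exponent_le h1le hα1.le
        _ = |x| / M := Real.rpow_one _
        _ ≤ |x| / 2 := div_le_div_of_nonneg_left (abs_nonneg x) (by norm_num) hM
    have hx0 : (0:ℝ) ≤ |x| ^ α * M ^ (-α) := by
      rw [hxM]; positivity
    have hrhs : γ * japZv ℓ ^ (-τ) * japR x ^ α * M ^ (-α) ≤ |x| / 2 := by
      rw [hjapRx]
      have hγj : γ * japZv ℓ ^ (-τ) ≤ 1 := mul_le_one₀ hγ1.le hjτ0 hjτ
      calc γ * japZv ℓ ^ (-τ) * |x| ^ α * M ^ (-α)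
          = (γ * japZv ℓ ^ (-τ)) * (|x| ^ α * M ^ (-α)) := by ring
        _ ≤ 1 * (|x| ^ α * M ^ (-α)) := mul_le_mul_of_nonneg_right hγj hx0
        _ = (|x| / M) ^ α := by rw [one_mul, hxM]
        _ ≤ |x| / 2 := hxM2
    have hA : |dotZ ω ℓ + μ n ω + σ * μ' n' ω| < |x| / 2 := lt_of_lt_of_le hres hrhs
    -- triangle inequality decomposition
    have hdecomp : x = (dotZ ω ℓ + μ n ω + σ * μ' n' ω) - dotZ ω ℓ
        - (μ n ω - lam n) - σ * (μ' n' ω - lam n')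
        - (lam n - (n:ℝ)) - σ * (lam n' - (n':ℝ)) := by
      rcases hσ with rfl | rfl <;> · rw [hxdef]; ring
    have key : |x| ≤ |dotZ ω ℓ + μ n ω + σ * μ' n' ω| + |dotZ ω ℓ|
        + |μ n ω - lam n| + |μ' n' ω - lam n'| + |lam n - (n:ℝ)| + |lam n' - (n':ℝ)| := by
      rw [hdecomp]
      exact aux_tri σ _ _ _ _ _ _ hσ
    have hCMle : C₀ / (γ₀ * M) ≤ C₀ / γ₀ :=
      div_le_div_of_nonneg_left hC₀.le hγ₀ (le_mul_of_one_le_right hγ₀.le hM1)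
    have hfin : |x| < 4 * M * japZv ℓ + 4 * mbar + 4 * (C₀ / γ₀) := by
      have : |x| < |x| / 2 + 2 * M * japZv ℓ + 2 * mbar + 2 * (C₀ / γ₀) := by
        linarith
      linarith
    have ha : 4 * mbar ≤ 4 * mbar * (M * japZv ℓ) :=
      le_mul_of_one_le_right (by positivity) hMj
    have hb : 4 * (C₀ / γ₀) ≤ 4 * (C₀ / γ₀) * (M * japZv ℓ) :=
      le_mul_of_one_le_right (by positivity) hMj
    linarith [hfin, ha, hb]
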